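/- Summing the local graded-mesh bounds: if β ≥ 1 and E_k ≤ C·h_k^{3/2}·x_{k−1}^{−a−1}·h_k (k ≥ 2) and E₁ ≤ C·N^{−β(1/2−a)} with h_k = (k/N)^β − ((k−1)/N)^β, x_k = (k/N)^β, and 0 < a < 1/2, then (Σ_{k=1}^N E_k²)^{1/2} ≤ C'·N^{−min{β(1/2−a), 3/2}+ε} for every ε > 0, with C' independent of N. -/

import Mathlib

open Real


private lemma rpow_eq_exp' {b : ℝ} (hb : 0 < b) (e : ℝ) :
    b ^ e = Real.exp (e * Real.log b) := by
  rw [Real.rpow_def_of_pos hb, mul_comm]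

private lemma rpow_sub_rpow_le' {x y β : ℝ} (hy : 0 ≤ y) (hx : 0 < x)
    (hβ : 1 ≤ β) : x ^ β - y ^ β ≤ β * x ^ (β - 1) * (x - y) := by
  have hs : -1 ≤ y / x - 1 := by
    have : 0 ≤ y / x := div_nonneg hy hx.le
    linarith
  have h := one_add_mul_self_le_rpow_one_add hs hβ
  have hxβ : (0:ℝ) < x ^ β := rpow_pos_of_pos hx β
  have h2 : (1 + (y/x - 1)) ^ β = y ^ β / x ^ β := by
    rw [show 1 + (y/x-1) = y/x by ring, Real.div_rpow hy hx.le]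
  rw [h2] at h
  have h4 : (1 + β * (y/x - 1)) * x ^ β ≤ y ^ β := by
    rw [← le_div_iff₀ hxβ]; exact h
  have h5 : (1 + β * (y/x - 1)) * x ^ β * x ≤ y ^ β * x :=
    mul_le_mul_of_nonneg_right h4 hx.le
  have hfield : (1 + β * (y/x - 1)) * x ^ β * x = x ^ β * x + β * y * x ^ β - β * (x ^ β) * x := by
    field_simp; ring
  rw [hfield] at h5
  have e : x ^ (β - 1) = x ^ β / x := by
    rw [Real.rpow_sub hx, Real.rpow_one]
  rw [e, show β * (x ^ β / x) * (x - y) = β * (x ^ β) * (x - y) / x by ring,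
    le_div_iff₀ hx]
  nlinarith [h5]

private lemma key_bound' (a β : ℝ) (ha0 : 0 < a) (ha1 : a < 1/2) (hβ : 1 ≤ β)
    {r n : ℝ} (hr : 2 ≤ r) (hrn : r ≤ n) :
    ((r/n) ^ β - ((r - 1)/n) ^ β) ^ ((3:ℝ)/2) * (((r - 1)/n) ^ β) ^ (-a - 1) *
      ((r/n) ^ β - ((r - 1)/n) ^ β)
    ≤ β ^ ((5:ℝ)/2) * 2 ^ (β*(a+1)) * n ^ (-(β*(3/2-a))) * r ^ (β*(3/2-a) - 5/2) := by
  have hβ0 : (0:ℝ) < β := by linarith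
  have hn : (0:ℝ) < n := by linarith
  have hr0 : (0:ℝ) < r := by linarith
  have hr1 : (0:ℝ) < r - 1 := by linarith
  have hx : (0:ℝ) < r/n := by positivity
  have hy : (0:ℝ) < (r-1)/n := by positivity
  have hyx : (r-1)/n < r/n := by
    apply div_lt_div_of_pos_right (by linarith) hn
  set X := (r/n) ^ β - ((r-1)/n) ^ β with hX
  have hXpos : 0 < X := sub_pos.mpr (Real.rpow_lt_rpow hy.le hyx hβ0)
  -- rewrite W
  have hW : (((r-1)/n) ^ β) ^ (-a-1) = ((r-1)/n) ^ (β * (-a-1)) := by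
    rw [Real.rpow_mul hy.le]
  -- combine the X powers
  have hcomb : X ^ ((3:ℝ)/2) * ((r-1)/n) ^ (β * (-a-1)) * X
      = X ^ ((5:ℝ)/2) * ((r-1)/n) ^ (β * (-a-1)) := by
    have : X ^ ((3:ℝ)/2) * X = X ^ ((5:ℝ)/2) := by
      nth_rewrite 2 [← Real.rpow_one X]
      rw [← Real.rpow_add hXpos]; norm_num
    calc X ^ ((3:ℝ)/2) * ((r-1)/n) ^ (β * (-a-1)) * X
        = (X ^ ((3:ℝ)/2) * X) * ((r-1)/n) ^ (β * (-a-1)) := by ring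
      _ = _ := by rw [this]
  rw [hW, hcomb]
  -- bound X by MVT
  have hXle : X ≤ β * (r/n) ^ (β - 1) * (1/n) := by
    have := rpow_sub_rpow_le' hy.le hx hβ
    have hsub : r/n - (r-1)/n = 1/n := by field_simp; ring
    rw [hsub] at this
    exact this
  have hexp_nonpos : β * (-a - 1) ≤ 0 :=
    mul_nonpos_of_nonneg_of_nonpos hβ0.le (by linarith)
  -- bound the W factor
  have hWle : ((r-1)/n) ^ (β * (-a-1)) ≤ (r/(2*n)) ^ (β * (-a-1)) := by
    apply Real.rpow_le_rpow_of_nonpos (by positivity) _ hexp_nonpos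
    rw [div_le_div_iff₀ (by positivity) hn]
    nlinarith
  have hXle' : X ^ ((5:ℝ)/2) ≤ (β * (r/n) ^ (β - 1) * (1/n)) ^ ((5:ℝ)/2) :=
    Real.rpow_le_rpow hXpos.le hXle (by norm_num)
  have hB : (0:ℝ) < β * (r/n) ^ (β - 1) * (1/n) := by positivity
  calc X ^ ((5:ℝ)/2) * ((r-1)/n) ^ (β * (-a-1))
      ≤ (β * (r/n) ^ (β - 1) * (1/n)) ^ ((5:ℝ)/2) * (r/(2*n)) ^ (β * (-a-1)) := by
        apply mul_le_mul hXle' hWle (Real.rpow_nonneg hy.le _) (Real.rpow_nonneg hB.le _)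
    _ = β ^ ((5:ℝ)/2) * 2 ^ (β*(a+1)) * n ^ (-(β*(3/2-a))) * r ^ (β*(3/2-a) - 5/2) := by
        rw [rpow_eq_exp' hB, rpow_eq_exp' (show (0:ℝ) < r/(2*n) by positivity),
          rpow_eq_exp' hβ0, rpow_eq_exp' (show (0:ℝ) < 2 by norm_num),
          rpow_eq_exp' hn, rpow_eq_exp' hr0, ← Real.exp_add, ← Real.exp_add,
          ← Real.exp_add, ← Real.exp_add]
        congr 1
        have l1 : Real.log (β * (r/n) ^ (β - 1) * (1/n))
            = Real.log β + (β - 1) * (Real.log r - Real.log n) - Real.log n := by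
          rw [Real.log_mul (by positivity) (by positivity),
            Real.log_mul (by positivity) (by positivity),
            Real.log_rpow hx, Real.log_div hr0.ne' hn.ne', one_div, Real.log_inv]
          ring
        have l2 : Real.log (r/(2*n)) = Real.log r - (Real.log 2 + Real.log n) := by
          rw [Real.log_div hr0.ne' (by positivity), Real.log_mul (by norm_num) hn.ne']
        rw [l1, l2]
        ring

private lemma sqrt_add_le' {x y : ℝ} (hx : 0 ≤ x) (hy : 0 ≤ y) :
    Real.sqrt (x + y) ≤ Real.sqrt x + Real.sqrt y := by
  have h : x + y ≤ (Real.sqrt x + Real.sqrt y)^2 := by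
    have hx' := Real.sq_sqrt hx
    have hy' := Real.sq_sqrt hy
    nlinarith [Real.sqrt_nonneg x, Real.sqrt_nonneg y]
  calc Real.sqrt (x+y) ≤ Real.sqrt ((Real.sqrt x + Real.sqrt y)^2) := Real.sqrt_le_sqrt h
    _ = Real.sqrt x + Real.sqrt y := Real.sqrt_sq (by positivity)

private lemma sum_rpow_bound' (p δ : ℝ) (hδ : 0 < δ) (N : ℕ) (hN : 1 ≤ N) :
    ∑ k ∈ Finset.Icc 1 N, (k:ℝ) ^ p ≤
      (∑' k : ℕ, (k:ℝ) ^ (-1 - δ)) * (N:ℝ) ^ (max (p + 1 + δ) 0) := by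
  have hsum : Summable (fun k : ℕ => (k:ℝ) ^ (-1 - δ)) :=
    Real.summable_nat_rpow.mpr (by linarith)
  have hN1 : (1:ℝ) ≤ (N:ℝ) := by exact_mod_cast hN
  calc ∑ k ∈ Finset.Icc 1 N, (k:ℝ)^p
      ≤ ∑ k ∈ Finset.Icc 1 N, (N:ℝ)^(max (p+1+δ) 0) * (k:ℝ)^(-1-δ) := by
        apply Finset.sum_le_sum
        intro k hk
        obtain ⟨hk1, hkN⟩ := Finset.mem_Icc.mp hk
        have hkr : (1:ℝ) ≤ (k:ℝ) := by exact_mod_cast hk1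
        have hk0 : (0:ℝ) < (k:ℝ) := by linarith
        have hkN' : (k:ℝ) ≤ (N:ℝ) := by exact_mod_cast hkN
        have e : (k:ℝ)^p = (k:ℝ)^(p+1+δ) * (k:ℝ)^(-1-δ) := by
          rw [← Real.rpow_add hk0]; ring_nf
        rw [e]
        apply mul_le_mul_of_nonneg_right _ (Real.rpow_nonneg hk0.le _)
        rcases le_or_gt 0 (p+1+δ) with h|h
        · calc (k:ℝ)^(p+1+δ) ≤ (N:ℝ)^(p+1+δ) := Real.rpow_le_rpow hk0.le hkN' h
            _ ≤ (N:ℝ)^(max (p+1+δ) 0) :=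
              Real.rpow_le_rpow_of_exponent_le hN1 (le_max_left _ _)
        · calc (k:ℝ)^(p+1+δ) ≤ 1 := Real.rpow_le_one_of_one_le_of_nonpos hkr h.le
            _ = (N:ℝ)^(0:ℝ) := (Real.rpow_zero _).symm
            _ ≤ (N:ℝ)^(max (p+1+δ) 0) :=
              Real.rpow_le_rpow_of_exponent_le hN1 (le_max_right _ _)
    _ = (N:ℝ)^(max (p+1+δ) 0) * ∑ k ∈ Finset.Icc 1 N, (k:ℝ)^(-1-δ) := by
        rw [Finset.mul_sum]
    _ ≤ (N:ℝ)^(max (p+1+δ) 0) * ∑' k : ℕ, (k:ℝ)^(-1-δ) := by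
        apply mul_le_mul_of_nonneg_left _ (Real.rpow_nonneg (by positivity) _)
        exact Summable.sum_le_tsum _ (fun k _ => Real.rpow_nonneg (Nat.cast_nonneg k) _) hsum
    _ = _ := mul_comm _ _

private lemma sq_rpow' {b : ℝ} (hb : 0 ≤ b) (e : ℝ) : (b ^ e)^2 = b ^ (e*2) := by
  rw [Real.rpow_mul hb, Real.rpow_two]

/-- Summation step in the proof of Lemma 7: if the local errors E_k on the β-graded mesh
(h_k = (k/N)^β - ((k-1)/N)^β, x_k = (k/N)^β) satisfy E_k ≤ C h_k^{3/2} x_{k-1}^{-a-1} h_k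
for 2 ≤ k ≤ N and E₁ ≤ C N^{-β(1/2-a)}, then (Σ_{k=1}^N E_k²)^{1/2} ≤
C' N^{-min{β(1/2-a), 3/2} + ε} with C' independent of N and of E. -/
theorem stmt_14 (a β C ε : ℝ) (ha0 : 0 < a) (ha1 : a < 1/2) (hβ : 1 ≤ β)
    (hC : 0 < C) (hε : 0 < ε) :
    ∃ C' : ℝ, 0 < C' ∧ ∀ N : ℕ, 1 ≤ N → ∀ E : ℕ → ℝ,
      (∀ k, 0 ≤ E k) →
      E 1 ≤ C * (N:ℝ) ^ (-β * (1/2 - a)) →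
      (∀ k : ℕ, 2 ≤ k → k ≤ N →
        E k ≤ C * (((k:ℝ)/N) ^ β - (((k:ℝ) - 1)/N) ^ β) ^ ((3:ℝ)/2) *
              ((((k:ℝ) - 1)/N) ^ β) ^ (-a - 1) *
              (((k:ℝ)/N) ^ β - (((k:ℝ) - 1)/N) ^ β)) →
      Real.sqrt (∑ k ∈ Finset.Icc 1 N, (E k)^2) ≤
        C' * (N:ℝ) ^ (-(min (β*(1/2 - a)) (3/2)) + ε) := by
  have hβ0 : (0:ℝ) < β := by linarith
  set γ : ℝ := β * (3/2 - a) with hγdef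
  set m : ℝ := min (β*(1/2 - a)) (3/2) with hmdef
  set K : ℝ := C * (β ^ ((5:ℝ)/2) * 2 ^ (β*(a+1))) with hKdef
  set S : ℝ := ∑' k : ℕ, (k:ℝ) ^ (-1 - 2*ε) with hSdef
  have hK : 0 < K := by
    apply mul_pos hC
    exact mul_pos (Real.rpow_pos_of_pos hβ0 _) (Real.rpow_pos_of_pos two_pos _)
  have hS : 0 ≤ S := tsum_nonneg (fun k => Real.rpow_nonneg (Nat.cast_nonneg k) _)
  have hmle1 : m ≤ β*(1/2 - a) := min_le_left _ _
  have hmle2 : m ≤ 3/2 := min_le_right _ _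
  have hmleγ : m ≤ γ := by
    have : β*(1/2 - a) ≤ γ := by rw [hγdef]; nlinarith
    linarith
  refine ⟨C + K * Real.sqrt S + 1, by positivity, ?_⟩
  intro N hN E hE hE1 h2
  have hN1 : (1:ℝ) ≤ (N:ℝ) := by exact_mod_cast hN
  have hN0 : (0:ℝ) < (N:ℝ) := by linarith
  -- split the sum
  have hsplit : ∑ k ∈ Finset.Icc 1 N, (E k)^2
      = (E 1)^2 + ∑ k ∈ Finset.Icc 2 N, (E k)^2 := by
    rw [Finset.Icc_eq_cons_Ioc hN, Finset.sum_cons, ← Finset.Icc_add_one_left_eq_Ioc]; rfl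
  -- head bound
  have hhead : Real.sqrt ((E 1)^2) ≤ C * (N:ℝ) ^ (-m + ε) := by
    rw [Real.sqrt_sq (hE 1)]
    calc E 1 ≤ C * (N:ℝ) ^ (-β * (1/2 - a)) := hE1
      _ ≤ C * (N:ℝ) ^ (-m + ε) := by
          apply mul_le_mul_of_nonneg_left _ hC.le
          exact Real.rpow_le_rpow_of_exponent_le hN1 (by linarith)
  -- tail bound
  have htail : ∑ k ∈ Finset.Icc 2 N, (E k)^2
      ≤ K^2 * S * ((N:ℝ) ^ (-m + ε))^2 := by
    have step1 : ∑ k ∈ Finset.Icc 2 N, (E k)^2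
        ≤ ∑ k ∈ Finset.Icc 2 N, K^2 * (N:ℝ) ^ ((-γ)*2) * (k:ℝ) ^ ((γ - 5/2)*2) := by
      apply Finset.sum_le_sum
      intro k hk
      obtain ⟨hk2, hkN⟩ := Finset.mem_Icc.mp hk
      have hkr : (2:ℝ) ≤ (k:ℝ) := by exact_mod_cast hk2
      have hkN' : (k:ℝ) ≤ (N:ℝ) := by exact_mod_cast hkN
      have hEk : E k ≤ K * ((N:ℝ) ^ (-γ) * (k:ℝ) ^ (γ - 5/2)) := by
        calc E k ≤ C * (((k:ℝ)/N) ^ β - (((k:ℝ) - 1)/N) ^ β) ^ ((3:ℝ)/2) *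
              ((((k:ℝ) - 1)/N) ^ β) ^ (-a - 1) *
              (((k:ℝ)/N) ^ β - (((k:ℝ) - 1)/N) ^ β) := h2 k hk2 hkN
          _ = C * ((((k:ℝ)/N) ^ β - (((k:ℝ) - 1)/N) ^ β) ^ ((3:ℝ)/2) *
              ((((k:ℝ) - 1)/N) ^ β) ^ (-a - 1) *
              (((k:ℝ)/N) ^ β - (((k:ℝ) - 1)/N) ^ β)) := by ring
          _ ≤ C * (β ^ ((5:ℝ)/2) * 2 ^ (β*(a+1)) * (N:ℝ) ^ (-(β*(3/2-a))) *
              (k:ℝ) ^ (β*(3/2-a) - 5/2)) :=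
            mul_le_mul_of_nonneg_left (key_bound' a β ha0 ha1 hβ hkr hkN') hC.le
          _ = K * ((N:ℝ) ^ (-γ) * (k:ℝ) ^ (γ - 5/2)) := by rw [hKdef, hγdef]; ring
      calc (E k)^2 ≤ (K * ((N:ℝ) ^ (-γ) * (k:ℝ) ^ (γ - 5/2)))^2 :=
            pow_le_pow_left₀ (hE k) hEk 2
        _ = K^2 * (N:ℝ) ^ ((-γ)*2) * (k:ℝ) ^ ((γ - 5/2)*2) := by
            rw [mul_pow K, mul_pow ((N:ℝ) ^ (-γ)), sq_rpow' hN0.le,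
              sq_rpow' (Nat.cast_nonneg k), ← mul_assoc]
    have step2 : ∑ k ∈ Finset.Icc 2 N, (k:ℝ) ^ ((γ - 5/2)*2)
        ≤ S * (N:ℝ) ^ (max ((γ - 5/2)*2 + 1 + 2*ε) 0) := by
      calc ∑ k ∈ Finset.Icc 2 N, (k:ℝ) ^ ((γ - 5/2)*2)
          ≤ ∑ k ∈ Finset.Icc 1 N, (k:ℝ) ^ ((γ - 5/2)*2) := by
            apply Finset.sum_le_sum_of_subset_of_nonneg
            · apply Finset.Icc_subset_Icc_left; omega
            · intro k _ _; exact Real.rpow_nonneg (Nat.cast_nonneg k) _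
        _ ≤ _ := sum_rpow_bound' _ _ (by linarith) N hN
    have hexp : (-γ)*2 + max ((γ - 5/2)*2 + 1 + 2*ε) 0 ≤ (-m + ε)*2 := by
      rcases le_or_gt ((γ - 5/2)*2 + 1 + 2*ε) 0 with h|h
      · rw [max_eq_right h]; nlinarith
      · rw [max_eq_left h.le]; nlinarith
    calc ∑ k ∈ Finset.Icc 2 N, (E k)^2
        ≤ ∑ k ∈ Finset.Icc 2 N, K^2 * (N:ℝ) ^ ((-γ)*2) * (k:ℝ) ^ ((γ - 5/2)*2) := step1
      _ = K^2 * (N:ℝ) ^ ((-γ)*2) * ∑ k ∈ Finset.Icc 2 N, (k:ℝ) ^ ((γ - 5/2)*2) := by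
          rw [Finset.mul_sum]
      _ ≤ K^2 * (N:ℝ) ^ ((-γ)*2) * (S * (N:ℝ) ^ (max ((γ - 5/2)*2 + 1 + 2*ε) 0)) := by
          apply mul_le_mul_of_nonneg_left step2 (by positivity)
      _ = K^2 * S * ((N:ℝ) ^ ((-γ)*2) * (N:ℝ) ^ (max ((γ - 5/2)*2 + 1 + 2*ε) 0)) := by
          ring
      _ = K^2 * S * (N:ℝ) ^ ((-γ)*2 + max ((γ - 5/2)*2 + 1 + 2*ε) 0) := by
          rw [← Real.rpow_add hN0]
      _ ≤ K^2 * S * (N:ℝ) ^ ((-m + ε)*2) := by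
          apply mul_le_mul_of_nonneg_left _ (by positivity)
          exact Real.rpow_le_rpow_of_exponent_le hN1 hexp
      _ = K^2 * S * ((N:ℝ) ^ (-m + ε))^2 := by rw [sq_rpow' hN0.le]
  -- combine
  have hsqrt_tail : Real.sqrt (K^2 * S * ((N:ℝ) ^ (-m + ε))^2)
      = K * Real.sqrt S * (N:ℝ) ^ (-m + ε) := by
    rw [Real.sqrt_mul (by positivity : (0:ℝ) ≤ K^2*S),
      Real.sqrt_mul (sq_nonneg K) S, Real.sqrt_sq hK.le,
      Real.sqrt_sq (by positivity : (0:ℝ) ≤ (N:ℝ)^(-m+ε))]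
  calc Real.sqrt (∑ k ∈ Finset.Icc 1 N, (E k)^2)
      = Real.sqrt ((E 1)^2 + ∑ k ∈ Finset.Icc 2 N, (E k)^2) := by rw [hsplit]
    _ ≤ Real.sqrt ((E 1)^2 + K^2 * S * ((N:ℝ) ^ (-m + ε))^2) := by
        apply Real.sqrt_le_sqrt; linarith
    _ ≤ Real.sqrt ((E 1)^2) + Real.sqrt (K^2 * S * ((N:ℝ) ^ (-m + ε))^2) :=
        sqrt_add_le' (by positivity) (by positivity)
    _ ≤ C * (N:ℝ) ^ (-m + ε) + K * Real.sqrt S * (N:ℝ) ^ (-m + ε) := by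
        rw [hsqrt_tail]; linarith
    _ ≤ (C + K * Real.sqrt S + 1) * (N:ℝ) ^ (-m + ε) := by
        have : (0:ℝ) ≤ (N:ℝ) ^ (-m + ε) := Real.rpow_nonneg hN0.le _
        nlinarith
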